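/- arXiv:1408.2043 — 2 statements merged into one kernel-verified Lean document; each statement's English description precedes it below -/
import Mathlib

section
/- Let k ∈ (0,1) and n ∈ ℤ. The function g₁(u) = E(u,k) − tan u·√(1−k²sin²u) is strictly decreasing on the interval ((2n−1)π/2, (2n+1)π/2); moreover g₁(u) → +∞ as u → ((2n−1)π/2)⁺ and g₁(u) → −∞ as u → ((2n+1)π/2)⁻. (Monotonicity and boundary behaviour of g₁ = f₁/cn used to prove uniqueness of the roots of f₁.) -/
open Real Filter Topology

/-- Incomplete elliptic integral of the second kind in Legendre form:
`E(u,k) = ∫₀ᵘ √(1 − k² sin² φ) dφ`. -/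
noncomputable def EllE (u k : ℝ) : ℝ :=
  ∫ φ in (0:ℝ)..u, Real.sqrt (1 - k ^ 2 * Real.sin φ ^ 2)

section Aux

variable {k : ℝ}

lemma ellP_pos (hk0 : 0 < k) (hk1 : k < 1) (u : ℝ) :
    0 < 1 - k ^ 2 * Real.sin u ^ 2 := by
  nlinarith [Real.sin_sq_le_one u, sq_nonneg (Real.sin u), sq_nonneg k]

lemma ell_cont (k : ℝ) : Continuous fun φ : ℝ => Real.sqrt (1 - k ^ 2 * Real.sin φ ^ 2) :=
  (continuous_const.sub (continuous_const.mul (Real.continuous_sin.pow 2))).sqrt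

lemma hasDerivAt_EllE (k u : ℝ) :
    HasDerivAt (fun u => EllE u k) (Real.sqrt (1 - k ^ 2 * Real.sin u ^ 2)) u :=
  ((ell_cont k).integral_hasStrictDerivAt 0 u).hasDerivAt

lemma hasDerivAt_g (hk0 : 0 < k) (hk1 : k < 1) {u : ℝ} (hcos : Real.cos u ≠ 0) :
    HasDerivAt (fun u : ℝ => EllE u k - Real.tan u * Real.sqrt (1 - k ^ 2 * Real.sin u ^ 2))
      ((k ^ 2 - 1) * Real.sin u ^ 2 /
        (Real.sqrt (1 - k ^ 2 * Real.sin u ^ 2) * Real.cos u ^ 2)) u := by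
  have hP : 0 < 1 - k ^ 2 * Real.sin u ^ 2 := ellP_pos hk0 hk1 u
  have hQ : 0 < Real.sqrt (1 - k ^ 2 * Real.sin u ^ 2) := Real.sqrt_pos.2 hP
  have hP' : HasDerivAt (fun u : ℝ => 1 - k ^ 2 * Real.sin u ^ 2)
      (-(k ^ 2 * (2 * Real.sin u * Real.cos u))) u := by
    have h1 : HasDerivAt (fun u : ℝ => Real.sin u ^ 2)
        (2 * Real.sin u ^ 1 * Real.cos u) u := (Real.hasDerivAt_sin u).pow 2
    have h2 := (h1.const_mul (k ^ 2)).const_sub 1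
    refine h2.congr_deriv ?_
    ring
  have hQ' : HasDerivAt (fun u : ℝ => Real.sqrt (1 - k ^ 2 * Real.sin u ^ 2))
      (1 / (2 * Real.sqrt (1 - k ^ 2 * Real.sin u ^ 2)) *
        (-(k ^ 2 * (2 * Real.sin u * Real.cos u)))) u :=
    (Real.hasDerivAt_sqrt hP.ne').comp u hP'
  have htan : HasDerivAt Real.tan (1 / Real.cos u ^ 2) u := Real.hasDerivAt_tan hcos
  have h := (hasDerivAt_EllE k u).sub ((htan.mul hQ'))
  refine h.congr_deriv ?_
  symm
  have hQ2 : Real.sqrt (1 - k ^ 2 * Real.sin u ^ 2) ^ 2 = 1 - k ^ 2 * Real.sin u ^ 2 :=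
    Real.sq_sqrt hP.le
  rw [Real.tan_eq_sin_div_cos]
  have hsc : Real.sin u ^ 2 + Real.cos u ^ 2 = 1 := Real.sin_sq_add_cos_sq u
  field_simp
  linear_combination (1 - Real.cos u ^ 2) * hQ2 - hsc

lemma cos_ne_zero_of_mem (n : ℤ) {u : ℝ}
    (hu : u ∈ Set.Ioo ((2 * (n : ℝ) - 1) * π / 2) ((2 * (n : ℝ) + 1) * π / 2)) :
    Real.cos u ≠ 0 := by
  intro h
  obtain ⟨m, hm⟩ := Real.cos_eq_zero_iff.1 h
  rw [hm] at hu
  have hπ := Real.pi_pos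
  obtain ⟨h1, h2⟩ := hu
  have e1' : (2 * n - 1 : ℤ) < 2 * m + 1 := by
    have : ((2*n-1 : ℤ) : ℝ) < ((2*m+1 : ℤ) : ℝ) := by push_cast; nlinarith
    exact_mod_cast this
  have e2' : (2 * m + 1 : ℤ) < 2 * n + 1 := by
    have : ((2*m+1 : ℤ) : ℝ) < ((2*n+1 : ℤ) : ℝ) := by push_cast; nlinarith
    exact_mod_cast this
  omega

lemma sin_ne_zero_of_strict (n : ℤ) {u : ℝ}
    (hu : u ∈ Set.Ioo ((2 * (n : ℝ) - 1) * π / 2) ((2 * (n : ℝ) + 1) * π / 2))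
    (hne : u ≠ n * π) : Real.sin u ≠ 0 := by
  intro h
  obtain ⟨m, hm⟩ := Real.sin_eq_zero_iff.1 h
  rw [← hm] at hu hne
  have hπ := Real.pi_pos
  obtain ⟨h1, h2⟩ := hu
  have e1' : (2 * n - 1 : ℤ) < 2 * m := by
    exact_mod_cast (by push_cast; nlinarith : ((2*n-1 : ℤ) : ℝ) < ((2*m : ℤ) : ℝ))
  have e2' : (2 * m : ℤ) < 2 * n + 1 := by
    exact_mod_cast (by push_cast; nlinarith : ((2*m : ℤ) : ℝ) < ((2*n+1 : ℤ) : ℝ))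
  have : m = n := by omega
  exact hne (by rw [this])

end Aux

/-- For `k ∈ (0,1)` and `n ∈ ℤ`, the function
`g₁(u) = E(u,k) − tan u · √(1 − k² sin² u)` is strictly decreasing on
`((2n−1)π/2, (2n+1)π/2)`, tends to `+∞` as `u → ((2n−1)π/2)⁺` and to `−∞`
as `u → ((2n+1)π/2)⁻`. -/
theorem g1_strictAnti_and_limits (k : ℝ) (hk : k ∈ Set.Ioo (0:ℝ) 1) (n : ℤ) :
    StrictAntiOn
      (fun u : ℝ => EllE u k - Real.tan u * Real.sqrt (1 - k ^ 2 * Real.sin u ^ 2))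
      (Set.Ioo ((2 * (n:ℝ) - 1) * π / 2) ((2 * (n:ℝ) + 1) * π / 2)) ∧
    Tendsto (fun u : ℝ => EllE u k - Real.tan u * Real.sqrt (1 - k ^ 2 * Real.sin u ^ 2))
      (nhdsWithin ((2 * (n:ℝ) - 1) * π / 2) (Set.Ioi ((2 * (n:ℝ) - 1) * π / 2))) atTop ∧
    Tendsto (fun u : ℝ => EllE u k - Real.tan u * Real.sqrt (1 - k ^ 2 * Real.sin u ^ 2))
      (nhdsWithin ((2 * (n:ℝ) + 1) * π / 2) (Set.Iio ((2 * (n:ℝ) + 1) * π / 2))) atBot := by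
  obtain ⟨hk0, hk1⟩ := hk
  have hπ := Real.pi_pos
  set a : ℝ := (2 * (n:ℝ) - 1) * π / 2 with ha
  set b : ℝ := (2 * (n:ℝ) + 1) * π / 2 with hb
  set g : ℝ → ℝ := fun u => EllE u k - Real.tan u * Real.sqrt (1 - k ^ 2 * Real.sin u ^ 2)
    with hg
  have hna : a < (n : ℝ) * π := by rw [ha]; nlinarith
  have hnb : (n : ℝ) * π < b := by rw [hb]; nlinarith
  -- key facts about subintervals
  have hmemIoo : ∀ {c d : ℝ}, a ≤ c → d ≤ b →
      ∀ x ∈ Set.Ioo c d ∪ Set.Ioc c d ∪ Set.Ico c d, True := fun _ _ _ _ => trivial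
  have hderiv : ∀ {u : ℝ}, u ∈ Set.Ioo a b →
      deriv g u = (k ^ 2 - 1) * Real.sin u ^ 2 /
        (Real.sqrt (1 - k ^ 2 * Real.sin u ^ 2) * Real.cos u ^ 2) := by
    intro u hu
    exact (hasDerivAt_g hk0 hk1 (cos_ne_zero_of_mem n hu)).deriv
  have hderivneg : ∀ {u : ℝ}, u ∈ Set.Ioo a b → u ≠ (n : ℝ) * π → deriv g u < 0 := by
    intro u hu hne
    rw [hderiv hu]
    have hsin := sin_ne_zero_of_strict n hu hne
    have hP := ellP_pos hk0 hk1 u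
    have hQ : 0 < Real.sqrt (1 - k ^ 2 * Real.sin u ^ 2) := Real.sqrt_pos.2 hP
    have hcos := cos_ne_zero_of_mem n hu
    apply div_neg_of_neg_of_pos
    · have hs2 : 0 < Real.sin u ^ 2 :=
        lt_of_le_of_ne (sq_nonneg _) (Ne.symm (pow_ne_zero 2 hsin))
      exact mul_neg_of_neg_of_pos (by nlinarith) hs2
    · positivity
  have hcont : ∀ {u : ℝ}, u ∈ Set.Ioo a b → ContinuousAt g u := fun hu =>
    (hasDerivAt_g hk0 hk1 (cos_ne_zero_of_mem n hu)).continuousAt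
  -- strict antitonicity on the two halves
  have hA : StrictAntiOn g (Set.Ioc a ((n:ℝ) * π)) := by
    apply strictAntiOn_of_deriv_neg (convex_Ioc _ _)
    · intro x hx
      exact (hcont ⟨hx.1, lt_of_le_of_lt hx.2 hnb⟩).continuousWithinAt
    · intro x hx
      rw [interior_Ioc] at hx
      exact hderivneg ⟨hx.1, hx.2.trans hnb⟩ (ne_of_lt hx.2)
  have hB : StrictAntiOn g (Set.Ico ((n:ℝ) * π) b) := by
    apply strictAntiOn_of_deriv_neg (convex_Ico _ _)
    · intro x hx
      exact (hcont ⟨lt_of_lt_of_le hna hx.1, hx.2⟩).continuousWithinAt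
    · intro x hx
      rw [interior_Ico] at hx
      exact hderivneg ⟨hna.trans hx.1, hx.2⟩ (ne_of_gt hx.1)
  have hanti : StrictAntiOn g (Set.Ioo a b) := by
    intro x hx y hy hxy
    rcases le_total y ((n:ℝ) * π) with h | h
    · exact hA ⟨hx.1, hxy.le.trans h⟩ ⟨hy.1, h⟩ hxy
    · rcases le_total ((n:ℝ) * π) x with h' | h'
      · exact hB ⟨h', hx.2⟩ ⟨h'.trans hxy.le, hy.2⟩ hxy
      · rcases eq_or_lt_of_le h' with rfl | hx'
        · exact hB ⟨le_rfl, hx.2⟩ ⟨h, hy.2⟩ hxy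
        · rcases eq_or_lt_of_le h with rfl | hy'
          · exact hA ⟨hx.1, h'⟩ ⟨hna, le_rfl⟩ hx'
          · exact (hB ⟨le_rfl, hnb⟩ ⟨h, hy.2⟩ hy').trans
              (hA ⟨hx.1, h'⟩ ⟨hna, le_rfl⟩ hx')
  refine ⟨hanti, ?_, ?_⟩
  -- limit at a from the right
  · have hEa : Tendsto (fun u => EllE u k) (nhdsWithin a (Set.Ioi a)) (𝓝 (EllE a k)) := by
      have : Continuous fun u => EllE u k :=
        intervalIntegral.continuous_primitive (fun c d => (ell_cont k).intervalIntegrable c d) 0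
      exact (this.tendsto a).mono_left nhdsWithin_le_nhds
    have htan : Tendsto Real.tan (nhdsWithin a (Set.Ioi a)) atBot := by
      have hshift : Tendsto (fun u : ℝ => u - (n:ℝ) * π) (nhdsWithin a (Set.Ioi a))
          (nhdsWithin (-(π/2)) (Set.Ioi (-(π/2)))) := by
        apply tendsto_nhdsWithin_of_tendsto_nhds_of_eventually_within
        · have := (continuous_sub_right ((n:ℝ) * π)).tendsto a
          rw [show a - (n:ℝ) * π = -(π/2) from by rw [ha]; ring] at this
          exact this.mono_left nhdsWithin_le_nhds
        · filter_upwards [self_mem_nhdsWithin] with u hu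
          have : a < u := hu
          have h0 : a - (n:ℝ) * π = -(π/2) := by rw [ha]; ring
          simp only [Set.mem_Ioi]
          linarith
      have := Real.tendsto_tan_neg_pi_div_two.comp hshift
      refine this.congr fun u => ?_
      simpa using Real.tan_periodic.sub_int_mul_eq (x := u) n
    have hQa : Tendsto (fun u : ℝ => Real.sqrt (1 - k ^ 2 * Real.sin u ^ 2))
        (nhdsWithin a (Set.Ioi a)) (𝓝 (Real.sqrt (1 - k ^ 2 * Real.sin a ^ 2))) :=
      ((ell_cont k).tendsto a).mono_left nhdsWithin_le_nhds
    have hQapos : 0 < Real.sqrt (1 - k ^ 2 * Real.sin a ^ 2) :=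
      Real.sqrt_pos.2 (ellP_pos hk0 hk1 a)
    have hprod : Tendsto (fun u : ℝ => Real.tan u * Real.sqrt (1 - k ^ 2 * Real.sin u ^ 2))
        (nhdsWithin a (Set.Ioi a)) atBot := htan.atBot_mul_pos hQapos hQa
    have hneg : Tendsto (fun u : ℝ => -(Real.tan u * Real.sqrt (1 - k ^ 2 * Real.sin u ^ 2)))
        (nhdsWithin a (Set.Ioi a)) atTop := tendsto_neg_atBot_atTop.comp hprod
    have := hEa.add_atTop hneg
    simpa [hg, sub_eq_add_neg] using this
  -- limit at b from the left
  · have hEb : Tendsto (fun u => EllE u k) (nhdsWithin b (Set.Iio b)) (𝓝 (EllE b k)) := by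
      have : Continuous fun u => EllE u k :=
        intervalIntegral.continuous_primitive (fun c d => (ell_cont k).intervalIntegrable c d) 0
      exact (this.tendsto b).mono_left nhdsWithin_le_nhds
    have htan : Tendsto Real.tan (nhdsWithin b (Set.Iio b)) atTop := by
      have hshift : Tendsto (fun u : ℝ => u - (n:ℝ) * π) (nhdsWithin b (Set.Iio b))
          (nhdsWithin (π/2) (Set.Iio (π/2))) := by
        apply tendsto_nhdsWithin_of_tendsto_nhds_of_eventually_within
        · have := (continuous_sub_right ((n:ℝ) * π)).tendsto b
          rw [show b - (n:ℝ) * π = π/2 from by rw [hb]; ring] at this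
          exact this.mono_left nhdsWithin_le_nhds
        · filter_upwards [self_mem_nhdsWithin] with u hu
          have : u < b := hu
          have h0 : b - (n:ℝ) * π = π/2 := by rw [hb]; ring
          simp only [Set.mem_Iio]
          linarith
      have := Real.tendsto_tan_pi_div_two.comp hshift
      refine this.congr fun u => ?_
      simpa using Real.tan_periodic.sub_int_mul_eq (x := u) n
    have hQb : Tendsto (fun u : ℝ => Real.sqrt (1 - k ^ 2 * Real.sin u ^ 2))
        (nhdsWithin b (Set.Iio b)) (𝓝 (Real.sqrt (1 - k ^ 2 * Real.sin b ^ 2))) :=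
      ((ell_cont k).tendsto b).mono_left nhdsWithin_le_nhds
    have hQbpos : 0 < Real.sqrt (1 - k ^ 2 * Real.sin b ^ 2) :=
      Real.sqrt_pos.2 (ellP_pos hk0 hk1 b)
    have hprod : Tendsto (fun u : ℝ => Real.tan u * Real.sqrt (1 - k ^ 2 * Real.sin u ^ 2))
        (nhdsWithin b (Set.Iio b)) atTop := htan.atTop_mul_pos hQbpos hQb
    have hneg : Tendsto (fun u : ℝ => -(Real.tan u * Real.sqrt (1 - k ^ 2 * Real.sin u ^ 2)))
        (nhdsWithin b (Set.Iio b)) atBot := tendsto_neg_atTop_atBot.comp hprod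
    have := hEb.add_atBot hneg
    simpa [hg, sub_eq_add_neg] using this
end

section
/- For every k ∈ (0,1), every integer n, and every v ∈ ℝ, one has J₁(nπ, v, k) = 16·n²·k·E(k)·(E(k) − (1−k²)·K(k))·sin²v, and in particular J₁(nπ, v, k) ≥ 0. (The value of the Jacobian numerator J₁ at p = 2nK(k), i.e. u = am(2nK(k),k) = nπ, is nonnegative.) -/
open Real

/-- Incomplete elliptic integral of the first kind in Legendre form:
`F(u,k) = ∫₀ᵘ dφ/√(1 − k² sin² φ)`. -/
noncomputable def EllF (u k : ℝ) : ℝ :=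
  ∫ φ in (0:ℝ)..u, 1 / Real.sqrt (1 - k ^ 2 * Real.sin φ ^ 2)

/-- The numerator `J₁(u,v,k) = −4k(α₁ + α₂ + α₃)` of the Jacobian of the exponential
mapping of the sub-Riemannian problem on SH(2), in Legendre variables `u = am(p,k)`,
`v = am(τ,k)`. -/
noncomputable def J₁ (u v k : ℝ) : ℝ :=
  -4 * k *
    ((Real.sin u * Real.cos u * Real.sqrt (1 - k ^ 2 * Real.sin u ^ 2) *
        (2 * EllE u k - (1 - k ^ 2) * EllF u k)) +
     (-(1 - k ^ 2 * Real.sin u ^ 2) * Real.sin u ^ 2 -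
        k ^ 2 * Real.sin u ^ 2 * Real.cos v ^ 2) +
     (EllE u k * (Real.sin u ^ 2 - Real.sin v ^ 2) *
        (EllE u k - (1 - k ^ 2) * EllF u k)))

section Aux
variable {k : ℝ}

lemma aux_pos (hk : k ∈ Set.Ioo (0:ℝ) 1) (φ : ℝ) : 0 < 1 - k ^ 2 * Real.sin φ ^ 2 := by
  have h1 : k ^ 2 * Real.sin φ ^ 2 ≤ k ^ 2 * 1 := by
    have := Real.sin_sq_le_one φ
    nlinarith [sq_nonneg k]
  nlinarith [hk.1, hk.2]

lemma contE : Continuous fun φ : ℝ => Real.sqrt (1 - k ^ 2 * Real.sin φ ^ 2) := by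
  fun_prop

lemma contF (hk : k ∈ Set.Ioo (0:ℝ) 1) :
    Continuous fun φ : ℝ => 1 / Real.sqrt (1 - k ^ 2 * Real.sin φ ^ 2) := by
  apply Continuous.div continuous_const contE
  intro φ
  exact ne_of_gt (Real.sqrt_pos.2 (aux_pos hk φ))

lemma periE : Function.Periodic (fun φ : ℝ => Real.sqrt (1 - k ^ 2 * Real.sin φ ^ 2)) π := by
  intro x; simp [Real.sin_add_pi]

lemma periF : Function.Periodic (fun φ : ℝ => 1 / Real.sqrt (1 - k ^ 2 * Real.sin φ ^ 2)) π := by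
  intro x; simp [Real.sin_add_pi]

lemma npi_int (f : ℝ → ℝ) (hc : Continuous f) (hp : Function.Periodic f π)
    (hsym : ∀ x, f (π - x) = f x) (n : ℤ) :
    (∫ x in (0:ℝ)..(n:ℝ) * π, f x) = 2 * n * ∫ x in (0:ℝ)..π/2, f x := by
  have h1 : (∫ x in (π/2:ℝ)..π, f x) = ∫ x in (0:ℝ)..π/2, f x := by
    have := intervalIntegral.integral_comp_sub_left f π (a := 0) (b := π/2)
    rw [show π - π/2 = π/2 by ring, show π - 0 = π by ring] at this
    rw [← this]
    congr 1; ext x; exact hsym x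
  have h2 : (∫ x in (0:ℝ)..π, f x) = 2 * ∫ x in (0:ℝ)..π/2, f x := by
    rw [← intervalIntegral.integral_add_adjacent_intervals (a := (0:ℝ)) (b := π/2) (c := π)
      (hc.intervalIntegrable _ _) (hc.intervalIntegrable _ _), h1]
    ring
  have h3 := hp.intervalIntegral_add_zsmul_eq n 0 (fun t₁ t₂ => hc.intervalIntegrable _ _)
  simp only [zero_add, zsmul_eq_mul] at h3
  rw [h3, h2]
  ring

lemma EllE_npi (n : ℤ) : EllE ((n:ℝ) * π) k = 2 * n * EllE (π/2) k :=
  npi_int _ contE periE (fun x => by simp [Real.sin_pi_sub]) n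

lemma EllF_npi (hk : k ∈ Set.Ioo (0:ℝ) 1) (n : ℤ) :
    EllF ((n:ℝ) * π) k = 2 * n * EllF (π/2) k :=
  npi_int _ (contF hk) periF (fun x => by simp [Real.sin_pi_sub]) n

lemma EllE_nonneg : 0 ≤ EllE (π/2) k := by
  apply intervalIntegral.integral_nonneg (by positivity)
  intro x _; exact Real.sqrt_nonneg _

lemma key_nonneg (hk : k ∈ Set.Ioo (0:ℝ) 1) :
    0 ≤ EllE (π/2) k - (1 - k ^ 2) * EllF (π/2) k := by
  have hE : EllF (π/2) k * (1 - k^2) ≤ EllE (π/2) k := by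
    unfold EllE EllF
    rw [← intervalIntegral.integral_mul_const]
    apply intervalIntegral.integral_mono_on (by positivity)
      (((contF hk).mul continuous_const).intervalIntegrable _ _)
      (contE.intervalIntegrable _ _)
    intro x _
    have h0 := aux_pos hk x
    have hs : 0 < Real.sqrt (1 - k ^ 2 * Real.sin x ^ 2) := Real.sqrt_pos.2 h0
    have hsq : Real.sqrt (1 - k ^ 2 * Real.sin x ^ 2) ^ 2 = 1 - k ^ 2 * Real.sin x ^ 2 :=
      Real.sq_sqrt h0.le
    have h1 : k ^ 2 * Real.sin x ^ 2 ≤ k ^ 2 := by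
      nlinarith [Real.sin_sq_le_one x, sq_nonneg k]
    show 1 / Real.sqrt (1 - k ^ 2 * Real.sin x ^ 2) * (1 - k ^ 2) ≤ Real.sqrt (1 - k ^ 2 * Real.sin x ^ 2)
    rw [div_mul_eq_mul_div, one_mul, div_le_iff₀ hs]
    nlinarith
  linarith

end Aux

/-- For every `k ∈ (0,1)`, every integer `n`, and every `v ∈ ℝ`:
`J₁(nπ, v, k) = 16 n² k E(k) (E(k) − (1−k²)K(k)) sin² v ≥ 0`. -/
theorem J1_at_npi (k : ℝ) (hk : k ∈ Set.Ioo (0:ℝ) 1) (n : ℤ) (v : ℝ) :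
    J₁ ((n:ℝ) * π) v k =
      16 * (n:ℝ) ^ 2 * k * EllE (π / 2) k *
        (EllE (π / 2) k - (1 - k ^ 2) * EllF (π / 2) k) * Real.sin v ^ 2 ∧
    0 ≤ J₁ ((n:ℝ) * π) v k := by
  have hs : Real.sin ((n:ℝ) * π) = 0 := by
    simpa using Real.sin_int_mul_pi n
  have heq : J₁ ((n:ℝ) * π) v k =
      16 * (n:ℝ) ^ 2 * k * EllE (π / 2) k *
        (EllE (π / 2) k - (1 - k ^ 2) * EllF (π / 2) k) * Real.sin v ^ 2 := by
    unfold J₁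
    rw [hs, EllE_npi, EllF_npi hk]
    ring
  refine ⟨heq, ?_⟩
  rw [heq]
  have h1 := key_nonneg (k := k) hk
  have h2 := EllE_nonneg (k := k)
  have h3 : (0:ℝ) ≤ 16 * (n:ℝ)^2 * k := by nlinarith [sq_nonneg ((n:ℝ)), hk.1]
  have h4 : (0:ℝ) ≤ Real.sin v ^ 2 := sq_nonneg _
  nlinarith [mul_nonneg (mul_nonneg (mul_nonneg h3 h2) h1) h4]
end
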